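/- Let n > 1 and define δ_j = sin²(π/(2n+1))/sin²(π(j+1)/(2n+1)). Then the sum ∑_{i,j=1}^{n-1} min(i,j)·log(1-δ_i)·log(1-δ_j) equals (1/2)·∑_{j=1}^{n-1} log δ_j · log(1-δ_j). -/

import Mathlib

open Real

/-- `δ_j = sin²(π/(2n+1))/sin²(π(j+1)/(2n+1))`. -/
noncomputable def del (n j : ℕ) : ℝ :=
  Real.sin (π / (2 * n + 1)) ^ 2 / Real.sin (π * (j + 1) / (2 * n + 1)) ^ 2

open Finset

lemma aux_sin_sq_sub (A B : ℝ) :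
    Real.sin (A + B) * Real.sin (A - B) = Real.sin A ^ 2 - Real.sin B ^ 2 := by
  rw [Real.sin_add, Real.sin_sub]
  nlinarith [Real.sin_sq_add_cos_sq A, Real.sin_sq_add_cos_sq B]

lemma aux_tele (b : ℕ → ℝ) (k : ℕ) :
    ∀ m, k ≤ m + 1 → ∑ i ∈ Icc k m, (b (i + 1) - b i) = b (m + 1) - b k := by
  intro m
  induction m with
  | zero => intro h; interval_cases k <;> simp
  | succ m ih =>
    intro h
    rcases Nat.lt_or_ge (m + 1) k with hlt | hge
    · have hk : k = m + 2 := by omega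
      subst hk
      rw [Finset.Icc_eq_empty (by omega)]
      simp
    · rw [Finset.sum_Icc_succ_top (by omega), ih (by omega)]
      ring

lemma aux_abel (a : ℕ → ℝ) (m : ℕ) :
    ∑ j ∈ Icc 1 m, (a 1 - a (j + 1)) * ((a (j + 2) - a (j + 1)) - (a (j + 1) - a j))
      = ∑ j ∈ Icc 1 m, (a (j + 1) - a j) ^ 2
        + (a 1 - a (m + 1)) * (a (m + 2) - a (m + 1)) := by
  induction m with
  | zero => simp
  | succ m ih =>
    rw [Finset.sum_Icc_succ_top (show 1 ≤ m + 1 by omega),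
      Finset.sum_Icc_succ_top (show 1 ≤ m + 1 by omega), ih,
      show m + 1 + 1 = m + 2 from rfl, show m + 1 + 2 = m + 3 from rfl]
    ring

lemma aux_min (m : ℕ) (x : ℕ → ℝ) :
    ∑ i ∈ Icc 1 m, ∑ j ∈ Icc 1 m, (min i j : ℝ) * x i * x j
      = ∑ k ∈ Icc 1 m, (∑ i ∈ Icc k m, x i) ^ 2 := by
  have key : ∀ i ∈ Icc 1 m, ∀ j ∈ Icc 1 m,
      (min i j : ℝ) = ∑ k ∈ Icc 1 m,
        (if k ≤ i then (1 : ℝ) else 0) * (if k ≤ j then (1 : ℝ) else 0) := by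
    intro i hi j hj
    simp only [mem_Icc] at hi hj
    have h1 : ∀ k, (if k ≤ i then (1 : ℝ) else 0) * (if k ≤ j then (1 : ℝ) else 0)
        = if k ≤ min i j then (1 : ℝ) else 0 := by
      intro k; by_cases h1 : k ≤ i <;> by_cases h2 : k ≤ j <;>
        simp [h1, h2, le_min_iff]
    simp only [h1]
    rw [← Finset.sum_filter]
    have hfe : Finset.filter (fun k => k ≤ min i j) (Icc 1 m) = Icc 1 (min i j) := by
      ext k
      simp only [mem_filter, mem_Icc]
      omega
    rw [hfe]
    simp [Nat.card_Icc]
  have hfil : ∀ k ∈ Icc 1 m, ∀ y : ℕ → ℝ,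
      ∑ i ∈ Icc 1 m, (if k ≤ i then (1 : ℝ) else 0) * y i = ∑ i ∈ Icc k m, y i := by
    intro k hk y
    simp only [mem_Icc] at hk
    have h2 : ∀ i, (if k ≤ i then (1 : ℝ) else 0) * y i = if k ≤ i then y i else 0 := by
      intro i; by_cases h : k ≤ i <;> simp [h]
    simp only [h2]
    rw [← Finset.sum_filter]
    congr 1
    ext i
    simp only [mem_filter, mem_Icc]
    omega
  calc ∑ i ∈ Icc 1 m, ∑ j ∈ Icc 1 m, (min i j : ℝ) * x i * x j
      = ∑ i ∈ Icc 1 m, ∑ j ∈ Icc 1 m, ∑ k ∈ Icc 1 m,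
          ((if k ≤ i then (1 : ℝ) else 0) * x i) * ((if k ≤ j then (1 : ℝ) else 0) * x j) := by
        refine Finset.sum_congr rfl fun i hi => Finset.sum_congr rfl fun j hj => ?_
        rw [key i hi j hj, Finset.sum_mul, Finset.sum_mul]
        exact Finset.sum_congr rfl fun k _ => by ring
    _ = ∑ i ∈ Icc 1 m, ∑ k ∈ Icc 1 m, ∑ j ∈ Icc 1 m,
          ((if k ≤ i then (1 : ℝ) else 0) * x i) * ((if k ≤ j then (1 : ℝ) else 0) * x j) :=
        Finset.sum_congr rfl fun i _ => Finset.sum_comm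
    _ = ∑ k ∈ Icc 1 m, ∑ i ∈ Icc 1 m, ∑ j ∈ Icc 1 m,
          ((if k ≤ i then (1 : ℝ) else 0) * x i) * ((if k ≤ j then (1 : ℝ) else 0) * x j) :=
        Finset.sum_comm
    _ = ∑ k ∈ Icc 1 m, (∑ i ∈ Icc k m, x i) ^ 2 := by
        refine Finset.sum_congr rfl fun k hk => ?_
        rw [sq, ← hfil k hk x, Finset.sum_mul]
        refine Finset.sum_congr rfl fun i _ => ?_
        rw [Finset.mul_sum]

theorem del_log_sum_identity (n : ℕ) (hn : 1 < n) :
    ∑ i ∈ Finset.Icc 1 (n - 1), ∑ j ∈ Finset.Icc 1 (n - 1),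
        (min i j : ℝ) * Real.log (1 - del n i) * Real.log (1 - del n j)
      = (1/2) * ∑ j ∈ Finset.Icc 1 (n - 1), Real.log (del n j) * Real.log (1 - del n j) := by
  set θ : ℝ := π / (2 * n + 1) with hθ
  set a : ℕ → ℝ := fun k => Real.log (Real.sin (k * θ)) with ha
  have hNpos : (0 : ℝ) < 2 * n + 1 := by positivity
  have sinpos : ∀ k : ℕ, 1 ≤ k → k ≤ 2 * n → 0 < Real.sin (k * θ) := by
    intro k hk1 hk2
    apply Real.sin_pos_of_pos_of_lt_pi
    · have hk : (0 : ℝ) < k := by exact_mod_cast hk1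
      have hth : 0 < θ := by rw [hθ]; positivity
      positivity
    · have hk : (k : ℝ) < 2 * n + 1 := by
        have : k < 2 * n + 1 := by omega
        exact_mod_cast this
      rw [hθ]
      calc (k : ℝ) * (π / (2 * n + 1)) < (2 * n + 1) * (π / (2 * n + 1)) := by
            apply mul_lt_mul_of_pos_right hk
            positivity
        _ = π := by field_simp
  -- a (n+1) = a n
  have key3 : a (n + 1) = a n := by
    have h1 : ((n : ℝ) + 1) * θ = π - (n : ℝ) * θ := by
      rw [hθ]; field_simp; ring
    simp only [ha]
    push_cast
    rw [h1, Real.sin_pi_sub]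
  -- log (1 - del n j)
  have key1 : ∀ j ∈ Icc 1 (n - 1), Real.log (1 - del n j)
      = (a (j + 2) - a (j + 1)) - (a (j + 1) - a j) := by
    intro j hj
    simp only [mem_Icc] at hj
    have hj1 : 1 ≤ j := hj.1
    have hj2 : j ≤ n - 1 := hj.2
    have s1 : 0 < Real.sin ((j : ℝ) * θ) := sinpos j hj1 (by omega)
    have s2 : 0 < Real.sin (((j : ℝ) + 1) * θ) := by
      have := sinpos (j + 1) (by omega) (by omega); push_cast at this; exact this
    have s3 : 0 < Real.sin (((j : ℝ) + 2) * θ) := by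
      have := sinpos (j + 2) (by omega) (by omega); push_cast at this; exact this
    have hang : π * ((j : ℝ) + 1) / (2 * (n : ℝ) + 1) = ((j : ℝ) + 1) * θ := by
      rw [hθ]; ring
    have hsq := aux_sin_sq_sub (((j : ℝ) + 1) * θ) θ
    rw [show ((j : ℝ) + 1) * θ + θ = ((j : ℝ) + 2) * θ from by ring,
      show ((j : ℝ) + 1) * θ - θ = (j : ℝ) * θ from by ring] at hsq
    have s2' : Real.sin (((j : ℝ) + 1) * θ) ≠ 0 := ne_of_gt s2
    have h2 : Real.sin ((j : ℝ) * θ) * Real.sin (((j : ℝ) + 2) * θ)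
        = Real.sin (((j : ℝ) + 1) * θ) ^ 2 - Real.sin θ ^ 2 := by
      rw [← hsq]; ring
    have e : (1 : ℝ) - del n j
        = Real.sin ((j : ℝ) * θ) * Real.sin (((j : ℝ) + 2) * θ)
            / Real.sin (((j : ℝ) + 1) * θ) ^ 2 := by
      rw [del, hang, ← hθ, h2]
      field_simp
    rw [e, Real.log_div (by positivity) (by positivity),
      Real.log_mul (by positivity) (by positivity), Real.log_pow]
    simp only [ha]
    push_cast
    ring
  -- log (del n j)
  have key2 : ∀ j ∈ Icc 1 (n - 1), Real.log (del n j) = 2 * (a 1 - a (j + 1)) := by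
    intro j hj
    simp only [mem_Icc] at hj
    have s2 : 0 < Real.sin (((j : ℝ) + 1) * θ) := by
      have := sinpos (j + 1) (by omega) (by omega); push_cast at this; exact this
    have s0 : 0 < Real.sin θ := by
      have := sinpos 1 le_rfl (by omega); push_cast at this; rwa [one_mul] at this
    have hang : π * ((j : ℝ) + 1) / (2 * (n : ℝ) + 1) = ((j : ℝ) + 1) * θ := by
      rw [hθ]; ring
    rw [del, hang, ← hθ, Real.log_div (by positivity) (by positivity),
      Real.log_pow, Real.log_pow]
    simp only [ha]
    push_cast
    rw [one_mul]
    ring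
  -- rewrite LHS
  set L : ℕ → ℝ := fun i => (a (i + 2) - a (i + 1)) - (a (i + 1) - a i) with hL
  have hLHS : ∑ i ∈ Icc 1 (n - 1), ∑ j ∈ Icc 1 (n - 1),
      (min i j : ℝ) * Real.log (1 - del n i) * Real.log (1 - del n j)
      = ∑ i ∈ Icc 1 (n - 1), ∑ j ∈ Icc 1 (n - 1), (min i j : ℝ) * L i * L j := by
    refine Finset.sum_congr rfl fun i hi => Finset.sum_congr rfl fun j hj => ?_
    rw [key1 i hi, key1 j hj]
  rw [hLHS, aux_min]
  -- rewrite RHS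
  have hRHS : ∑ j ∈ Icc 1 (n - 1), Real.log (del n j) * Real.log (1 - del n j)
      = ∑ j ∈ Icc 1 (n - 1), 2 * ((a 1 - a (j + 1)) * L j) := by
    refine Finset.sum_congr rfl fun j hj => ?_
    rw [key1 j hj, key2 j hj]
    simp only [hL]
    ring
  rw [hRHS, ← Finset.mul_sum]
  set b : ℕ → ℝ := fun k => a (k + 1) - a k with hb
  have hbn : b n = 0 := by simp only [hb]; rw [key3]; ring
  have hm1 : n - 1 + 1 = n := by omega
  have hm2 : n - 1 + 2 = n + 1 := by omega
  -- LHS inner sums telescope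
  have hLHS2 : ∀ k ∈ Icc 1 (n - 1), ∑ i ∈ Icc k (n - 1), L i = - b k := by
    intro k hk
    simp only [mem_Icc] at hk
    have hstep : ∑ i ∈ Icc k (n - 1), L i = ∑ i ∈ Icc k (n - 1), (b (i + 1) - b i) := by
      refine Finset.sum_congr rfl fun i _ => ?_
      simp only [hL, hb, show i + 1 + 1 = i + 2 from rfl]
    rw [hstep, aux_tele b k (n - 1) (by omega), hm1, hbn]
    ring
  have hLHS3 : ∑ k ∈ Icc 1 (n - 1), (∑ i ∈ Icc k (n - 1), L i) ^ 2
      = ∑ k ∈ Icc 1 (n - 1), (b k) ^ 2 := by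
    refine Finset.sum_congr rfl fun k hk => ?_
    rw [hLHS2 k hk]
    ring
  rw [hLHS3]
  -- RHS via Abel summation
  have habel := aux_abel a (n - 1)
  rw [hm1, hm2] at habel
  rw [show (a 1 - a n) * (a (n + 1) - a n) = 0 from by rw [key3]; ring, add_zero] at habel
  have hfinal : ∑ j ∈ Icc 1 (n - 1), (a 1 - a (j + 1)) * L j
      = ∑ j ∈ Icc 1 (n - 1), (b j) ^ 2 := by
    simp only [hL, hb]
    exact habel
  rw [show (1 : ℝ) / 2 * (2 * ∑ j ∈ Icc 1 (n - 1), (a 1 - a (j + 1)) * L j)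
      = ∑ j ∈ Icc 1 (n - 1), (a 1 - a (j + 1)) * L j from by ring, hfinal]
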